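/- (Differential privacy of the distributed mechanism.) Let n ≥ 1, λ > 0, Δf > 0. Let l = (l₁, …, l_n) and l′ = (l′₁, …, l′_n) be two load vectors that agree in all coordinates except one coordinate i₀, with |l_{i₀} − l′_{i₀}| ≤ Δf. Let the mechanism output M(l) = ∑_{i=1}^n lᵢ + ∑_{i=1}^n (G₁ᵢ − G₂ᵢ), where the G₁ᵢ, G₂ᵢ are 2n mutually independent Gamma(shape 1/n, scale λ) random variables. Then for every measurable set S ⊆ ℝ, P[M(l) ∈ S] ≤ exp(Δf/λ) · P[M(l′) ∈ S]; that is, the mechanism is (Δf/λ, 0)-differentially private. -/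

import Mathlib

open MeasureTheory ProbabilityTheory
open scoped BigOperators ENNReal


section DPAux
open MeasureTheory ProbabilityTheory Real Set

lemma real_beta {a b : ℝ} (ha : 0 < a) (hb : 0 < b) :
    ∫ x in (0:ℝ)..1, x ^ (a-1) * (1-x) ^ (b-1) =
      Real.Gamma a * Real.Gamma b / Real.Gamma (a+b) := by
  have h := Complex.Gamma_mul_Gamma_eq_betaIntegral (s := (a:ℂ)) (t := (b:ℂ))
    (by simpa using ha) (by simpa using hb)
  have hβ : Complex.betaIntegral (a:ℂ) (b:ℂ) =
      ((∫ x in (0:ℝ)..1, x ^ (a-1) * (1-x) ^ (b-1) : ℝ) : ℂ) := by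
    rw [Complex.betaIntegral, ← intervalIntegral.integral_ofReal]
    refine intervalIntegral.integral_congr fun x hx => ?_
    rw [Set.uIcc_of_le (by norm_num : (0:ℝ) ≤ 1)] at hx
    rw [show ((a:ℂ) - 1) = ((a-1 : ℝ) : ℂ) by push_cast; ring,
      show ((b:ℂ) - 1) = ((b-1 : ℝ) : ℂ) by push_cast; ring,
      show (1 - (x:ℂ)) = ((1 - x : ℝ) : ℂ) by push_cast; ring,
      ← Complex.ofReal_cpow hx.1, ← Complex.ofReal_cpow (by linarith [hx.2])]
    push_cast
    ring
  rw [hβ, ← Complex.ofReal_add, Complex.Gamma_ofReal, Complex.Gamma_ofReal,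
    Complex.Gamma_ofReal, ← Complex.ofReal_mul, ← Complex.ofReal_mul] at h
  have h' := Complex.ofReal_injective h
  have hΓ : Real.Gamma (a+b) ≠ 0 := (Real.Gamma_pos_of_pos (by linarith)).ne'
  field_simp [h']
  rw [h', mul_comm]

lemma beta_intervalIntegrable {a b z : ℝ} (ha : 0 < a) (hb : 0 < b) (hz : 0 < z) :
    IntervalIntegrable (fun x => x ^ (a-1) * (z-x) ^ (b-1)) volume 0 z := by
  have h1 : IntervalIntegrable (fun x => x ^ (a-1) * (z-x) ^ (b-1)) volume 0 (z/2) := by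
    refine (intervalIntegral.intervalIntegrable_rpow' (by linarith)).mul_continuousOn ?_
    refine ContinuousOn.rpow_const ((continuous_const.sub continuous_id).continuousOn) ?_
    intro x hx
    rw [Set.uIcc_of_le (by linarith : (0:ℝ) ≤ z/2)] at hx
    exact Or.inl (by intro h; nlinarith [hx.2])
  have h2 : IntervalIntegrable (fun x => x ^ (a-1) * (z-x) ^ (b-1)) volume (z/2) z := by
    have hint : IntervalIntegrable (fun x => (z-x) ^ (b-1)) volume (z/2) z := by
      have := ((intervalIntegral.intervalIntegrable_rpow' (a := 0) (b := z/2)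
        (r := b-1) (by linarith)).comp_sub_left z).symm
      rw [show z - z/2 = z/2 by ring] at this; simpa using this
    refine hint.continuousOn_mul ?_
    refine ContinuousOn.rpow_const continuous_id.continuousOn ?_
    intro x hx
    rw [Set.uIcc_of_le (by linarith : z/2 ≤ z)] at hx
    exact Or.inl (by intro h; nlinarith [hx.1])
  exact h1.trans h2

lemma beta_scaled {a b z : ℝ} (ha : 0 < a) (hb : 0 < b) (hz : 0 < z) :
    ∫ x in (0:ℝ)..z, x ^ (a-1) * (z-x) ^ (b-1) =
      z ^ (a+b-1) * (Real.Gamma a * Real.Gamma b / Real.Gamma (a+b)) := by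
  have h := intervalIntegral.smul_integral_comp_mul_left
    (fun x => x ^ (a-1) * (z-x) ^ (b-1)) z (a := 0) (b := 1)
  rw [mul_zero, mul_one] at h
  rw [← h]
  have heq : ∫ t in (0:ℝ)..1, (z*t) ^ (a-1) * (z - z*t) ^ (b-1)
      = ∫ t in (0:ℝ)..1, z ^ (a-1) * z ^ (b-1) * (t ^ (a-1) * (1-t) ^ (b-1)) := by
    refine intervalIntegral.integral_congr fun t ht => ?_
    rw [Set.uIcc_of_le (by norm_num : (0:ℝ) ≤ 1)] at ht
    have h1 : z - z*t = z * (1-t) := by ring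
    rw [h1, Real.mul_rpow hz.le ht.1, Real.mul_rpow hz.le (by linarith [ht.2])]
    ring
  rw [heq, intervalIntegral.integral_const_mul, real_beta ha hb, smul_eq_mul]
  have hz' : z * (z ^ (a-1) * z ^ (b-1)) = z ^ (a+b-1) := by
    calc z * (z ^ (a-1) * z ^ (b-1)) = z ^ (1:ℝ) * z ^ (a-1) * z ^ (b-1) := by
          rw [Real.rpow_one]; ring
      _ = z ^ (1+(a-1)+(b-1)) := by rw [← Real.rpow_add hz, ← Real.rpow_add hz]
      _ = z ^ (a+b-1) := by ring_nf
  rw [← mul_assoc, hz']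


lemma gammaPDF_conv {a b r : ℝ} (ha : 0 < a) (hb : 0 < b) (hr : 0 < r) {z : ℝ}
    (hz : z ≠ 0) :
    ∫⁻ x, gammaPDF a r x * gammaPDF b r (z - x) = gammaPDF (a+b) r z := by
  rcases lt_or_gt_of_ne hz with hneg | hpos
  · have h0 : ∀ x : ℝ, gammaPDF a r x * gammaPDF b r (z - x) = 0 := by
      intro x
      rcases le_or_gt 0 x with hx | hx
      · rw [gammaPDF_of_neg (by linarith : z - x < 0), mul_zero]
      · rw [gammaPDF_of_neg hx, zero_mul]
    simp only [h0, lintegral_zero, gammaPDF_of_neg hneg]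
  · set K : ℝ := r ^ a / Real.Gamma a * (r ^ b / Real.Gamma b) * Real.exp (-(r*z)) with hK
    set G : ℝ → ℝ := fun x => K * (x ^ (a-1) * (z-x) ^ (b-1)) with hG
    have hF : ∀ x, gammaPDFReal a r x * gammaPDFReal b r (z - x)
        = (Set.Icc 0 z).indicator G x := by
      intro x
      simp only [gammaPDFReal, Set.indicator, Set.mem_Icc]
      rcases le_or_gt 0 x with hx | hx
      · rcases le_or_gt x z with hxz | hxz
        · rw [if_pos hx, if_pos (by linarith : (0:ℝ) ≤ z - x), if_pos ⟨hx, hxz⟩, hG, hK]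
          have he : rexp (-(r*x)) * rexp (-(r*(z-x))) = rexp (-(r*z)) := by
            rw [← Real.exp_add]; ring_nf
          rw [← he]; ring
        · rw [if_pos hx, if_neg (not_le.2 (by linarith : z - x < 0)),
            if_neg (by push_neg; intro _; linarith), mul_zero]
      · rw [if_neg (not_le.2 hx), zero_mul,
          if_neg (by push_neg; intro h; linarith)]
    have hGint : IntegrableOn G (Set.Icc 0 z) volume := by
      rw [integrableOn_Icc_iff_integrableOn_Ioc]
      have hb1 := beta_intervalIntegrable ha hb hpos
      rw [intervalIntegrable_iff_integrableOn_Ioc_of_le hpos.le] at hb1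
      exact hb1.const_mul K
    have hFnn : ∀ x, 0 ≤ gammaPDFReal a r x * gammaPDFReal b r (z - x) := fun x =>
      mul_nonneg (gammaPDFReal_nonneg ha hr x) (gammaPDFReal_nonneg hb hr _)
    have hFint : Integrable (fun x => gammaPDFReal a r x * gammaPDFReal b r (z - x)) := by
      rw [show (fun x => gammaPDFReal a r x * gammaPDFReal b r (z - x))
          = (Set.Icc 0 z).indicator G from funext hF]
      exact (integrable_indicator_iff measurableSet_Icc).2 hGint
    calc ∫⁻ x, gammaPDF a r x * gammaPDF b r (z - x)
        = ∫⁻ x, ENNReal.ofReal (gammaPDFReal a r x * gammaPDFReal b r (z - x)) := by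
          refine lintegral_congr fun x => ?_
          rw [gammaPDF, gammaPDF, ← ENNReal.ofReal_mul (gammaPDFReal_nonneg ha hr x)]
      _ = ENNReal.ofReal (∫ x, gammaPDFReal a r x * gammaPDFReal b r (z - x)) :=
          (ofReal_integral_eq_lintegral_ofReal hFint (ae_of_all _ hFnn)).symm
      _ = gammaPDF (a+b) r z := by
          rw [show (fun x => gammaPDFReal a r x * gammaPDFReal b r (z - x))
              = (Set.Icc 0 z).indicator G from funext hF,
            integral_indicator measurableSet_Icc, integral_Icc_eq_integral_Ioc,
            ← intervalIntegral.integral_of_le hpos.le, hG,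
            intervalIntegral.integral_const_mul, beta_scaled ha hb hpos,
            gammaPDF, gammaPDFReal, if_pos hpos.le]
          congr 1
          have hra : r ^ (a+b) = r ^ a * r ^ b := (Real.rpow_add hr a b)
          have hΓa : Real.Gamma a ≠ 0 := (Real.Gamma_pos_of_pos ha).ne'
          have hΓb : Real.Gamma b ≠ 0 := (Real.Gamma_pos_of_pos hb).ne'
          have hΓab : Real.Gamma (a+b) ≠ 0 := (Real.Gamma_pos_of_pos (by linarith)).ne'
          rw [hK, hra]
          field_simp

section MeasAux
variable {Ω : Type*} [MeasurableSpace Ω] {μ : Measure Ω} [IsProbabilityMeasure μ]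


lemma measurable_gammaPDF (a r : ℝ) : Measurable (gammaPDF a r) :=
  (measurable_gammaPDFReal a r).ennreal_ofReal

lemma indepFun_gamma_add {X Y : Ω → ℝ} (hX : Measurable X) (hY : Measurable Y)
    (h : IndepFun X Y μ) {a b r : ℝ} (ha : 0 < a) (hb : 0 < b) (hr : 0 < r)
    (hmX : Measure.map X μ = gammaMeasure a r) (hmY : Measure.map Y μ = gammaMeasure b r) :
    Measure.map (X + Y) μ = gammaMeasure (a+b) r := by
  have hpair : Measure.map (fun ω => (X ω, Y ω)) μ
      = (gammaMeasure a r).prod (gammaMeasure b r) := by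
    rw [← hmX, ← hmY]
    exact ((indepFun_iff_map_prod_eq_prod_map_map hX.aemeasurable hY.aemeasurable).1 h)
  have hmap : Measure.map (X + Y) μ
      = Measure.map (fun p : ℝ × ℝ => p.1 + p.2) ((gammaMeasure a r).prod (gammaMeasure b r)) := by
    rw [← hpair, Measure.map_map measurable_add (hX.prodMk hY)]
    rfl
  rw [hmap]
  have hprob : IsProbabilityMeasure (gammaMeasure b r) := isProbabilityMeasure_gammaMeasure hb hr
  ext s hs
  rw [Measure.map_apply measurable_add hs, Measure.prod_apply (measurable_add hs)]
  have hslice : ∀ x : ℝ, (Prod.mk x ⁻¹' ((fun p : ℝ × ℝ => p.1 + p.2) ⁻¹' s))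
      = {y : ℝ | x + y ∈ s} := fun x => rfl
  simp only [hslice]
  have hsm : ∀ x : ℝ, MeasurableSet {y : ℝ | x + y ∈ s} :=
    fun x => (measurable_const_add x) hs
  -- inner: gammaMeasure b r {y | x + y ∈ s} = ∫⁻ z, s.indicator 1 z * gammaPDF b r (z - x)
  have hinner : ∀ x : ℝ, (gammaMeasure b r) {y : ℝ | x + y ∈ s}
      = ∫⁻ z, s.indicator 1 z * gammaPDF b r (z - x) := by
    intro x
    rw [gammaMeasure, withDensity_apply _ (hsm x), ← lintegral_indicator (hsm x),
      ← lintegral_add_right_eq_self (fun z => s.indicator 1 z * gammaPDF b r (z - x)) x]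
    refine lintegral_congr fun y => ?_
    simp only [add_sub_cancel_right]
    by_cases hy : x + y ∈ s
    · simp [Set.indicator_of_mem, hy, Set.indicator_of_mem (show y + x ∈ s by rwa [add_comm]),
        Pi.one_apply, one_mul]
    · simp [Set.indicator_of_notMem, hy,
        Set.indicator_of_notMem (show y + x ∉ s by rwa [add_comm])]
  -- outer withDensity
  rw [gammaMeasure, lintegral_withDensity_eq_lintegral_mul volume (measurable_gammaPDF a r)
    (by
      have : Measurable fun x => (gammaMeasure b r) {y : ℝ | x + y ∈ s} := by
        simp only [← hslice]
        exact measurable_measure_prodMk_left (measurable_add hs)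
      exact this)]
  simp only [Pi.mul_apply, hinner]
  have hmeas2 : Measurable (Function.uncurry fun x z =>
      gammaPDF a r x * (s.indicator 1 z * gammaPDF b r (z - x))) := by
    apply Measurable.mul
    · exact (measurable_gammaPDF a r).comp measurable_fst
    · exact ((measurable_one.indicator hs).comp measurable_snd).mul
        ((measurable_gammaPDF b r).comp (measurable_snd.sub measurable_fst))
  calc ∫⁻ x, gammaPDF a r x * ∫⁻ z, s.indicator 1 z * gammaPDF b r (z - x)
      = ∫⁻ x, ∫⁻ z, gammaPDF a r x * (s.indicator 1 z * gammaPDF b r (z - x)) := by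
        refine lintegral_congr fun x => ?_
        exact (lintegral_const_mul (gammaPDF a r x)
          ((measurable_one.indicator hs).mul
            ((measurable_gammaPDF b r).comp (measurable_id.sub measurable_const)))).symm
    _ = ∫⁻ z, ∫⁻ x, gammaPDF a r x * (s.indicator 1 z * gammaPDF b r (z - x)) := by
        exact lintegral_lintegral_swap hmeas2.aemeasurable
    _ = ∫⁻ z, s.indicator 1 z * gammaPDF (a+b) r z := by
        refine lintegral_congr_ae ?_
        filter_upwards [compl_mem_ae_iff.2 (volume_singleton (a := (0:ℝ)))] with z hz
        have hz' : z ≠ 0 := hz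
        calc ∫⁻ x, gammaPDF a r x * (s.indicator 1 z * gammaPDF b r (z - x))
            = s.indicator 1 z * ∫⁻ x, gammaPDF a r x * gammaPDF b r (z - x) := by
              have h1 : ∫⁻ x, gammaPDF a r x * (s.indicator 1 z * gammaPDF b r (z - x))
                  = ∫⁻ x, s.indicator 1 z * (gammaPDF a r x * gammaPDF b r (z - x)) :=
                lintegral_congr fun x => by ring
              rw [h1]
              exact lintegral_const_mul (s.indicator 1 z) ((measurable_gammaPDF a r).mul
                ((measurable_gammaPDF b r).comp (measurable_const.sub measurable_id)))
          _ = s.indicator 1 z * gammaPDF (a+b) r z := by rw [gammaPDF_conv ha hb hr hz']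
    _ = (gammaMeasure (a+b) r) s := by
        rw [gammaMeasure, withDensity_apply _ hs, ← lintegral_indicator hs]
        refine lintegral_congr fun z => ?_
        by_cases hzs : z ∈ s
        · simp [Set.indicator_of_mem hzs]
        · simp [Set.indicator_of_notMem hzs]



omit [IsProbabilityMeasure μ] in
lemma map_sum_gamma {ι : Type*} {f : ι → Ω → ℝ} (hmeas : ∀ i, Measurable (f i))
    (hindep : iIndepFun f μ)
    {r : ℝ} (hr : 0 < r) {a : ι → ℝ} (ha : ∀ i, 0 < a i)
    (hf : ∀ i, Measure.map (f i) μ = gammaMeasure (a i) r)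
    {s : Finset ι} (hs : s.Nonempty) [IsProbabilityMeasure μ] :
    Measure.map (∑ i ∈ s, f i) μ = gammaMeasure (∑ i ∈ s, a i) r := by
  induction hs using Finset.Nonempty.cons_induction with
  | singleton i => simpa using hf i
  | cons i s hi hs ih =>
    rw [Finset.sum_cons, Finset.sum_cons]
    have hsum : Measurable (∑ j ∈ s, f j) := by
      rw [show (∑ j ∈ s, f j) = fun ω => ∑ j ∈ s, f j ω from funext fun ω => by
        simp [Finset.sum_apply]]
      exact Finset.measurable_sum s fun j _ => hmeas j
    have hind := (hindep.indepFun_finsetSum_of_notMem hmeas hi).symm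
    exact indepFun_gamma_add (hmeas i) hsum hind (ha i)
      (Finset.sum_pos (fun j _ => ha j) hs) hr (hf i) ih

omit [IsProbabilityMeasure μ] in
lemma gamma_one_shift_core {r c : ℝ} (hr : 0 < r) (hc : 0 ≤ c) {B : Set ℝ}
    (hB : MeasurableSet B) :
    gammaMeasure 1 r ((fun x => x + c) ⁻¹' B)
      ≤ ENNReal.ofReal (Real.exp (r*c)) * gammaMeasure 1 r B := by
  have hBc : MeasurableSet ((fun x => x + c) ⁻¹' B) := (measurable_add_const c) hB
  rw [gammaMeasure, withDensity_apply _ hBc, withDensity_apply _ hB,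
    ← lintegral_indicator hBc, ← lintegral_indicator hB]
  have hrw : ∀ x, ((fun x => x + c) ⁻¹' B).indicator (gammaPDF 1 r) x
      = B.indicator (fun z => gammaPDF 1 r (z - c)) (x + c) := by
    intro x
    by_cases h : x + c ∈ B
    · simp [Set.indicator, Set.mem_preimage, h]
    · simp [Set.indicator, Set.mem_preimage, h]
  rw [lintegral_congr hrw,
    lintegral_add_right_eq_self (B.indicator fun z => gammaPDF 1 r (z - c)) c]
  have hpt : ∀ z, gammaPDF 1 r (z - c) ≤ ENNReal.ofReal (Real.exp (r*c)) * gammaPDF 1 r z := by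
    intro z
    rw [gammaPDF_eq, gammaPDF_eq]
    by_cases h : 0 ≤ z - c
    · rw [if_pos h, if_pos (by linarith : (0:ℝ) ≤ z), ← ENNReal.ofReal_mul (Real.exp_nonneg _)]
      apply ENNReal.ofReal_le_ofReal
      simp only [Real.Gamma_one, Real.rpow_one, sub_self, Real.rpow_zero, div_one, mul_one]
      rw [show rexp (r*c) * (r * rexp (-(r*z))) = r * (rexp (r*c) * rexp (-(r*z))) by ring,
        ← Real.exp_add, show r*c + -(r*z) = -(r*(z-c)) by ring]
    · rw [if_neg h]
      simp
  calc ∫⁻ z, B.indicator (fun z => gammaPDF 1 r (z - c)) z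
      ≤ ∫⁻ z, ENNReal.ofReal (Real.exp (r*c)) * B.indicator (gammaPDF 1 r) z := by
        refine lintegral_mono fun z => ?_
        by_cases hz : z ∈ B
        · rw [Set.indicator_of_mem hz, Set.indicator_of_mem hz]; exact hpt z
        · rw [Set.indicator_of_notMem hz, Set.indicator_of_notMem hz, mul_zero]
    _ = ENNReal.ofReal (Real.exp (r*c)) * ∫⁻ z, B.indicator (gammaPDF 1 r) z :=
        lintegral_const_mul _ ((measurable_gammaPDFReal 1 r).ennreal_ofReal.indicator hB)

lemma diff_shift_bound {X Y : Ω → ℝ} (hX : Measurable X) (hY : Measurable Y)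
    (h : IndepFun X Y μ) {r : ℝ} (hr : 0 < r)
    (hmX : Measure.map X μ = gammaMeasure 1 r) (hmY : Measure.map Y μ = gammaMeasure 1 r)
    (c : ℝ) {s : Set ℝ} (hs : MeasurableSet s) :
    μ {ω | X ω - Y ω + c ∈ s} ≤
      ENNReal.ofReal (Real.exp (r * |c|)) * μ {ω | X ω - Y ω ∈ s} := by
  have hprob : IsProbabilityMeasure (gammaMeasure 1 r) := isProbabilityMeasure_gammaMeasure one_pos hr
  rcases le_or_gt 0 c with hc | hc
  · -- pair (Y, X); shift in the X slot
    have hpair : Measure.map (fun ω => (Y ω, X ω)) μ = (gammaMeasure 1 r).prod (gammaMeasure 1 r) := by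
      have hh := (indepFun_iff_map_prod_eq_prod_map_map hY.aemeasurable hX.aemeasurable).1 h.symm
      rwa [hmX, hmY] at hh
    have hD : MeasurableSet {p : ℝ × ℝ | p.2 - p.1 + c ∈ s} :=
      ((measurable_snd.sub measurable_fst).add_const c) hs
    have hD0 : MeasurableSet {p : ℝ × ℝ | p.2 - p.1 ∈ s} :=
      (measurable_snd.sub measurable_fst) hs
    have h1 : μ {ω | X ω - Y ω + c ∈ s}
        = ((gammaMeasure 1 r).prod (gammaMeasure 1 r)) {p : ℝ × ℝ | p.2 - p.1 + c ∈ s} := by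
      rw [← hpair, Measure.map_apply (hY.prodMk hX) hD]; rfl
    have h2 : μ {ω | X ω - Y ω ∈ s}
        = ((gammaMeasure 1 r).prod (gammaMeasure 1 r)) {p : ℝ × ℝ | p.2 - p.1 ∈ s} := by
      rw [← hpair, Measure.map_apply (hY.prodMk hX) hD0]; rfl
    rw [h1, h2, Measure.prod_apply hD, Measure.prod_apply hD0, abs_of_nonneg hc]
    calc ∫⁻ y, gammaMeasure 1 r (Prod.mk y ⁻¹' {p : ℝ × ℝ | p.2 - p.1 + c ∈ s}) ∂(gammaMeasure 1 r)
        ≤ ∫⁻ y, ENNReal.ofReal (Real.exp (r*c)) *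
            gammaMeasure 1 r (Prod.mk y ⁻¹' {p : ℝ × ℝ | p.2 - p.1 ∈ s}) ∂(gammaMeasure 1 r) := by
          refine lintegral_mono fun y => ?_
          have hset : (Prod.mk y ⁻¹' {p : ℝ × ℝ | p.2 - p.1 + c ∈ s})
              = (fun x => x + c) ⁻¹' {x : ℝ | x - y ∈ s} := by
            ext x
            simp only [Set.mem_preimage, Set.mem_setOf_eq, sub_add_eq_add_sub]
          have hset0 : (Prod.mk y ⁻¹' {p : ℝ × ℝ | p.2 - p.1 ∈ s}) = {x : ℝ | x - y ∈ s} := rfl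
          rw [hset, hset0]
          exact gamma_one_shift_core hr hc ((measurable_sub_const y) hs)
      _ = ENNReal.ofReal (Real.exp (r*c)) *
            ∫⁻ y, gammaMeasure 1 r (Prod.mk y ⁻¹' {p : ℝ × ℝ | p.2 - p.1 ∈ s}) ∂(gammaMeasure 1 r) :=
          lintegral_const_mul _ (measurable_measure_prodMk_left hD0)
  · -- pair (X, Y); shift in the Y slot by -c ≥ 0
    have hpair : Measure.map (fun ω => (X ω, Y ω)) μ = (gammaMeasure 1 r).prod (gammaMeasure 1 r) := by
      have hh := (indepFun_iff_map_prod_eq_prod_map_map hX.aemeasurable hY.aemeasurable).1 h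
      rwa [hmX, hmY] at hh
    have hD : MeasurableSet {p : ℝ × ℝ | p.1 - p.2 + c ∈ s} :=
      ((measurable_fst.sub measurable_snd).add_const c) hs
    have hD0 : MeasurableSet {p : ℝ × ℝ | p.1 - p.2 ∈ s} :=
      (measurable_fst.sub measurable_snd) hs
    have h1 : μ {ω | X ω - Y ω + c ∈ s}
        = ((gammaMeasure 1 r).prod (gammaMeasure 1 r)) {p : ℝ × ℝ | p.1 - p.2 + c ∈ s} := by
      rw [← hpair, Measure.map_apply (hX.prodMk hY) hD]; rfl
    have h2 : μ {ω | X ω - Y ω ∈ s}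
        = ((gammaMeasure 1 r).prod (gammaMeasure 1 r)) {p : ℝ × ℝ | p.1 - p.2 ∈ s} := by
      rw [← hpair, Measure.map_apply (hX.prodMk hY) hD0]; rfl
    rw [h1, h2, Measure.prod_apply hD, Measure.prod_apply hD0, abs_of_neg hc]
    calc ∫⁻ x, gammaMeasure 1 r (Prod.mk x ⁻¹' {p : ℝ × ℝ | p.1 - p.2 + c ∈ s}) ∂(gammaMeasure 1 r)
        ≤ ∫⁻ x, ENNReal.ofReal (Real.exp (r * -c)) *
            gammaMeasure 1 r (Prod.mk x ⁻¹' {p : ℝ × ℝ | p.1 - p.2 ∈ s}) ∂(gammaMeasure 1 r) := by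
          refine lintegral_mono fun x => ?_
          have hset : (Prod.mk x ⁻¹' {p : ℝ × ℝ | p.1 - p.2 + c ∈ s})
              = (fun y => y + -c) ⁻¹' {y : ℝ | x - y ∈ s} := by
            ext y
            simp only [Set.mem_preimage, Set.mem_setOf_eq]
            constructor <;> intro hh
            · rwa [show x - (y + -c) = x - y + c by ring]
            · rwa [show x - y + c = x - (y + -c) by ring]
          have hset0 : (Prod.mk x ⁻¹' {p : ℝ × ℝ | p.1 - p.2 ∈ s}) = {y : ℝ | x - y ∈ s} := rfl
          rw [hset, hset0]
          exact gamma_one_shift_core hr (by linarith) ((measurable_const.sub measurable_id) hs)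
      _ = ENNReal.ofReal (Real.exp (r * -c)) *
            ∫⁻ x, gammaMeasure 1 r (Prod.mk x ⁻¹' {p : ℝ × ℝ | p.1 - p.2 ∈ s}) ∂(gammaMeasure 1 r) :=
          lintegral_const_mul _ (measurable_measure_prodMk_left hD0)

end MeasAux
end DPAux

/-- Differential privacy of the distributed mechanism: for two load vectors `l`, `l'`
agreeing except in one coordinate `i₀` with `|l i₀ − l' i₀| ≤ Δf`, the mechanism
`M(l) = ∑ i, l i + ∑ i, (G (Sum.inl i) − G (Sum.inr i))` with `2n` mutually independent
Gamma(shape `1/n`, scale `λ`, i.e. rate `1/λ`) noise variables satisfies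
`P[M(l) ∈ S] ≤ exp (Δf/λ) · P[M(l') ∈ S]` for every measurable `S`; that is, it is
`(Δf/λ, 0)`-differentially private. -/
theorem distributed_mechanism_diff_private
    {Ω : Type*} [MeasurableSpace Ω] (μ : Measure Ω) [IsProbabilityMeasure μ]
    (n : ℕ) (hn : 1 ≤ n) (lam Δf : ℝ) (hlam : 0 < lam) (hΔf : 0 < Δf)
    (l l' : Fin n → ℝ) (i₀ : Fin n)
    (hagree : ∀ i, i ≠ i₀ → l i = l' i) (hsens : |l i₀ - l' i₀| ≤ Δf)
    (G : (Fin n ⊕ Fin n) → Ω → ℝ) (hmeas : ∀ j, Measurable (G j))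
    (hindep : iIndepFun G μ)
    (hG : ∀ j, Measure.map (G j) μ = gammaMeasure (1 / n) (1 / lam))
    (S : Set ℝ) (hS : MeasurableSet S) :
    μ {ω | ((∑ i, l i) + ∑ i : Fin n, (G (Sum.inl i) ω - G (Sum.inr i) ω)) ∈ S} ≤
      ENNReal.ofReal (Real.exp (Δf / lam)) *
        μ {ω | ((∑ i, l' i) + ∑ i : Fin n, (G (Sum.inl i) ω - G (Sum.inr i) ω)) ∈ S} := by
  have hn0 : (0:ℝ) < n := by exact_mod_cast hn
  set r : ℝ := 1 / lam with hr_def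
  have hr : 0 < r := by positivity
  have hnemp : Nonempty (Fin n) := ⟨⟨0, hn⟩⟩
  set X : Ω → ℝ := fun ω => ∑ i : Fin n, G (Sum.inl i) ω with hX_def
  set Y : Ω → ℝ := fun ω => ∑ i : Fin n, G (Sum.inr i) ω with hY_def
  have hXmeas : Measurable X := Finset.measurable_sum _ fun i _ => hmeas (Sum.inl i)
  have hYmeas : Measurable Y := Finset.measurable_sum _ fun i _ => hmeas (Sum.inr i)
  have ha : ∀ j : Fin n ⊕ Fin n, (0:ℝ) < (fun _ => (1:ℝ)/n) j := fun _ => by positivity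
  -- laws of X and Y
  have hcard : ∀ g : Fin n → Fin n ⊕ Fin n, Function.Injective g →
      (∑ j ∈ Finset.univ.image g, (1:ℝ)/n) = 1 := by
    intro g hg
    rw [Finset.sum_const, Finset.card_image_of_injective _ hg, Finset.card_univ,
      Fintype.card_fin, nsmul_eq_mul]
    field_simp
  have hmapX : Measure.map X μ = gammaMeasure 1 r := by
    have h1 := map_sum_gamma (f := G) hmeas hindep hr ha
      (fun j => by rw [hG j]) (s := Finset.univ.image Sum.inl)
      ((Finset.univ_nonempty).image _)
    rw [hcard Sum.inl Sum.inl_injective] at h1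
    rw [← h1]
    congr 1
    funext ω
    rw [Finset.sum_apply, Finset.sum_image (fun i _ j _ h => Sum.inl_injective h)]
  have hmapY : Measure.map Y μ = gammaMeasure 1 r := by
    have h1 := map_sum_gamma (f := G) hmeas hindep hr ha
      (fun j => by rw [hG j]) (s := Finset.univ.image Sum.inr)
      ((Finset.univ_nonempty).image _)
    rw [hcard Sum.inr Sum.inr_injective] at h1
    rw [← h1]
    congr 1
    funext ω
    rw [Finset.sum_apply, Finset.sum_image (fun i _ j _ h => Sum.inr_injective h)]
  -- independence of X and Y
  have hXY : IndepFun X Y μ := by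
    have hdisj : Disjoint (Finset.univ.image (Sum.inl : Fin n → Fin n ⊕ Fin n))
        (Finset.univ.image (Sum.inr : Fin n → Fin n ⊕ Fin n)) := by
      rw [Finset.disjoint_left]
      rintro j hj hj'
      simp only [Finset.mem_image] at hj hj'
      obtain ⟨i, -, rfl⟩ := hj
      obtain ⟨i', -, h⟩ := hj'
      cases h
    have hbase := hindep.indepFun_finset (Finset.univ.image Sum.inl)
      (Finset.univ.image Sum.inr) hdisj hmeas
    have hφ : ∀ (T : Finset (Fin n ⊕ Fin n)),
        Measurable (fun v : (↥T → ℝ) => ∑ i : ↥T, v i) := fun T =>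
      Finset.measurable_sum _ fun i _ => measurable_pi_apply i
    have hcomp := hbase.comp (hφ _) (hφ _)
    have heq1 : ((fun v : (↥(Finset.univ.image (Sum.inl : Fin n → Fin n ⊕ Fin n)) → ℝ) =>
        ∑ i, v i) ∘ (fun a i => G (↑i) a)) = X := by
      funext ω
      simp only [Function.comp_apply, hX_def]
      rw [Finset.sum_coe_sort _ (fun j => G j ω),
        Finset.sum_image (fun i _ j _ h => Sum.inl_injective h)]
    have heq2 : ((fun v : (↥(Finset.univ.image (Sum.inr : Fin n → Fin n ⊕ Fin n)) → ℝ) =>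
        ∑ i, v i) ∘ (fun a i => G (↑i) a)) = Y := by
      funext ω
      simp only [Function.comp_apply, hY_def]
      rw [Finset.sum_coe_sort _ (fun j => G j ω),
        Finset.sum_image (fun i _ j _ h => Sum.inr_injective h)]
    rwa [heq1, heq2] at hcomp
  -- the shift constant
  set c : ℝ := (∑ i, l i) - (∑ i, l' i) with hc_def
  have hcval : c = l i₀ - l' i₀ := by
    rw [hc_def, ← Finset.sum_sub_distrib]
    rw [Finset.sum_eq_single i₀ (fun i _ hi => by rw [hagree i hi, sub_self])
      (fun h => absurd (Finset.mem_univ i₀) h)]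
  have hcabs : |c| ≤ Δf := by rw [hcval]; exact hsens
  set s₀ : Set ℝ := (fun z => (∑ i, l' i) + z) ⁻¹' S with hs₀_def
  have hs₀ : MeasurableSet s₀ := (measurable_const_add _) hS
  have hsetL : {ω | ((∑ i, l i) + ∑ i : Fin n, (G (Sum.inl i) ω - G (Sum.inr i) ω)) ∈ S}
      = {ω | X ω - Y ω + c ∈ s₀} := by
    ext ω
    simp only [Set.mem_setOf_eq, hs₀_def, Set.mem_preimage, Finset.sum_sub_distrib]
    constructor <;> intro h
    · rwa [show (∑ i, l' i) + (X ω - Y ω + c) = (∑ i, l i) + (X ω - Y ω) by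
        rw [hc_def]; ring]
    · rwa [show (∑ i, l' i) + (X ω - Y ω + c) = (∑ i, l i) + (X ω - Y ω) by
        rw [hc_def]; ring] at h
  have hsetR : {ω | ((∑ i, l' i) + ∑ i : Fin n, (G (Sum.inl i) ω - G (Sum.inr i) ω)) ∈ S}
      = {ω | X ω - Y ω ∈ s₀} := by
    ext ω
    simp only [Set.mem_setOf_eq, hs₀_def, Set.mem_preimage, Finset.sum_sub_distrib]
    rfl
  rw [hsetL, hsetR]
  calc μ {ω | X ω - Y ω + c ∈ s₀}
      ≤ ENNReal.ofReal (Real.exp (r * |c|)) * μ {ω | X ω - Y ω ∈ s₀} :=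
        diff_shift_bound hXmeas hYmeas hXY hr hmapX hmapY c hs₀
    _ ≤ ENNReal.ofReal (Real.exp (Δf / lam)) * μ {ω | X ω - Y ω ∈ s₀} := by
        refine mul_le_mul_left (ENNReal.ofReal_le_ofReal (Real.exp_le_exp.2 ?_)) _
        rw [hr_def]
        rw [div_eq_mul_inv Δf lam, show (1/lam) * |c| = |c| * lam⁻¹ by ring]
        exact mul_le_mul_of_nonneg_right hcabs (by positivity)
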